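/- Let π = 15342 ∈ S_5 (the transposition exchanging 2 and 5). Then η_5(π)(n_λ) = −n_λ for exactly the edges λ ∈ {25, 13, 14, 34}, and there is no other edge λ with η_5(π)(n_λ) = ±n_λ; the four vectors n_25, n_13, n_14, n_34 satisfy the linear relation n_25 + n_13 = n_14 + n_34 and span a 3-dimensional subspace; and the trace of η_5(π) restricted to the span of all ten vectors n_λ (λ ∈ Λ) equals −1. -/

import Mathlib

open Equiv

/-- XOR on `Fin 4` (the Klein group structure on vertices of a tetrahedron). -/
def xor4 (a b : Fin 4) : Fin 4 :=
  ⟨(a.val ^^^ b.val) % 4, Nat.mod_lt _ (by norm_num)⟩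

/-- The underlying function of the cross-ratio homomorphism `φ : S₄ → S₃`:
a permutation of the vertices `{0,1,2,3}` of a tetrahedron induces a permutation of the
three partitions of the vertex set into two pairs of opposite edges; the partition pairing
`0` with `j+1` is indexed by `j : Fin 3`. -/
def phiFun (π : Perm (Fin 4)) (j : Fin 3) : Fin 3 :=
  ⟨(xor4 (π 0) (π ⟨j.val + 1, by omega⟩)).val - 1, by
    have h := (xor4 (π 0) (π ⟨j.val + 1, by omega⟩)).isLt
    omega⟩

lemma phiFun_leftInv : ∀ (π : Perm (Fin 4)) (j : Fin 3), phiFun π⁻¹ (phiFun π j) = j := by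
  decide

/-- The cross-ratio homomorphism `φ : S₄ → S₃`. -/
def phi (π : Perm (Fin 4)) : Perm (Fin 3) where
  toFun := phiFun π
  invFun := phiFun π⁻¹
  left_inv := phiFun_leftInv π
  right_inv := fun j => by simpa using phiFun_leftInv π⁻¹ j

/-- Restriction of a permutation `π` to a bijection between the complement of `{i}`
and the complement of `{π i}`. -/
def restrictPerm {k : ℕ} (π : Perm (Fin k)) (i : Fin k) :
    {x : Fin k // x ≠ i} ≃ {x : Fin k // x ≠ π i} where
  toFun x := ⟨π x.1, fun h => x.2 (π.injective h)⟩
  invFun y := ⟨π.symm y.1, fun h => y.2 (by simpa using congrArg π h)⟩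
  left_inv x := Subtype.ext (π.symm_apply_apply x.1)
  right_inv y := Subtype.ext (π.apply_symm_apply y.1)

/-- The induced permutation `π_i ∈ S_k` of `π ∈ S_{k+1}`: the restriction of `π` to the
complement of `{i}`, reindexed via the order preserving identifications with `Fin k`. -/
def inducedPerm {k : ℕ} (π : Perm (Fin (k + 1))) (i : Fin (k + 1)) : Perm (Fin k) :=
  ((finSuccAboveEquiv i).trans ((restrictPerm π i).trans (finSuccAboveEquiv (π i)).symm))

/-- `η₄ : S₄ → Aut(V⁴)`, `V⁴ = ℝ³`: the signed cross-ratio representation,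
`η₄(π)(e_j) = sign(π) e_{φ(π) j}`. -/
noncomputable def eta4fun (π : Equiv.Perm (Fin 4)) (v : Fin 3 → ℝ) : Fin 3 → ℝ :=
  fun j => ((Equiv.Perm.sign π : ℤ) : ℝ) * v ((phi π)⁻¹ j)

/-- The canonical representation `η₅ : S₅ → Aut(V⁵)` on the space `V⁵` of `5 × 3`
real matrices: `η₅(π)(e_i ⊗ u) = e_{π(i)} ⊗ η₄(π_i)(u)`. -/
noncomputable def eta5fun (π : Equiv.Perm (Fin 5)) (v : Fin 5 → Fin 3 → ℝ) :
    Fin 5 → Fin 3 → ℝ :=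
  fun i => eta4fun (inducedPerm π (π⁻¹ i)) (v (π⁻¹ i))

/-- `η₅(π)` as a linear endomorphism of `V⁵`. -/
noncomputable def eta5lin (π : Equiv.Perm (Fin 5)) :
    (Fin 5 → Fin 3 → ℝ) →ₗ[ℝ] (Fin 5 → Fin 3 → ℝ) where
  toFun := eta5fun π
  map_add' := by
    intro v w; funext i j; simp [eta5fun, eta4fun, mul_add]
  map_smul' := by
    intro c v; funext i j; simp [eta5fun, eta4fun, smul_eq_mul]; ring

/-- Coefficient matrices of the ten characteristic functionals `r_λ`, `λ` an edge of
`{1,…,5}` (0-indexed: rows `1,…,5` become `0,…,4`, columns `(a,b,c)` become `(0,1,2)`).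
`rc p q` is the coefficient matrix of `r_{(p+1)(q+1)}` for `p < q`, and `0` otherwise. -/
def rc : Fin 5 → Fin 5 → Fin 5 → Fin 3 → ℝ :=
  -- r₁₂ = −a₃+a₄−a₅, r₁₃ = −a₂−b₄+b₅, r₁₄ = b₂−b₃−c₅, r₁₅ = −c₂+c₃−c₄,
  -- r₂₃ = −a₁+c₄−c₅, r₂₄ = b₁+c₃+b₅, r₂₅ = −c₁−b₃+b₄,
  -- r₃₄ = −c₁+c₂−a₅, r₃₅ = b₁−b₂−a₄, r₄₅ = −a₁+a₂−a₃
  ![![0,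
     ![![0,0,0], ![0,0,0], ![-1,0,0], ![1,0,0], ![-1,0,0]],
     ![![0,0,0], ![-1,0,0], ![0,0,0], ![0,-1,0], ![0,1,0]],
     ![![0,0,0], ![0,1,0], ![0,-1,0], ![0,0,0], ![0,0,-1]],
     ![![0,0,0], ![0,0,-1], ![0,0,1], ![0,0,-1], ![0,0,0]]],
    ![0, 0,
     ![![-1,0,0], ![0,0,0], ![0,0,0], ![0,0,1], ![0,0,-1]],
     ![![0,1,0], ![0,0,0], ![0,0,1], ![0,0,0], ![0,1,0]],
     ![![0,0,-1], ![0,0,0], ![0,-1,0], ![0,1,0], ![0,0,0]]],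
    ![0, 0, 0,
     ![![0,0,-1], ![0,0,1], ![0,0,0], ![0,0,0], ![-1,0,0]],
     ![![0,1,0], ![0,-1,0], ![0,0,0], ![-1,0,0], ![0,0,0]]],
    ![0, 0, 0, 0,
     ![![-1,0,0], ![1,0,0], ![-1,0,0], ![0,0,0], ![0,0,0]]],
    ![0, 0, 0, 0, 0]]

/-- The characteristic functional `r_λ : V⁵ → ℝ` for the edge `λ = {p,q}`, `p < q`. -/
def rfun (p q : Fin 5) (v : Fin 5 → Fin 3 → ℝ) : ℝ :=
  ∑ i, ∑ j, rc p q i j * v i j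

/-- The normal vector `n_λ ∈ L₅` of the hyperplane `r_λ = 0`: the orthogonal projection
of `3v_λ` to `L₅`, where `v_λ` is the coefficient matrix of `r_λ`. -/
def nvec (p q : Fin 5) : Fin 5 → Fin 3 → ℝ :=
  fun i j => 3 * rc p q i j - (rc p q i 0 + rc p q i 1 + rc p q i 2)

/-- The span of all ten normal vectors `n_λ`, `λ ∈ Λ`. -/
def Nspan : Submodule ℝ (Fin 5 → Fin 3 → ℝ) :=
  Submodule.span ℝ {x | ∃ p q : Fin 5, p < q ∧ x = nvec p q}

lemma eta5fun_def (π : Equiv.Perm (Fin 5)) (v : Fin 5 → Fin 3 → ℝ) (i : Fin 5) (j : Fin 3) :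
    eta5fun π v i j = ((Equiv.Perm.sign (inducedPerm π (π⁻¹ i)) : ℤ) : ℝ) *
      v (π⁻¹ i) ((phi (inducedPerm π (π⁻¹ i)))⁻¹ j) := rfl

lemma L1 : ∀ i : Fin 5, (Equiv.swap 1 4 : Equiv.Perm (Fin 5))⁻¹ i = ![0,4,2,3,1] i := by decide

lemma L2z : ∀ i : Fin 5, (Equiv.Perm.sign (inducedPerm (Equiv.swap 1 4 : Equiv.Perm (Fin 5)) i) : ℤ)
    = ![-1,1,-1,-1,1] i := by decide

lemma L3 : ∀ (i : Fin 5) (j : Fin 3),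
    (phi (inducedPerm (Equiv.swap 1 4 : Equiv.Perm (Fin 5)) i))⁻¹ j
      = ![![1,0,2],![2,0,1],![2,1,0],![2,1,0],![1,2,0]] i j := by decide
lemma eta5_swap14 (v : Fin 5 → Fin 3 → ℝ) (i : Fin 5) (j : Fin 3) :
    eta5fun (Equiv.swap 1 4) v i j =
      ![(-1:ℝ),1,-1,-1,1] i * v (![0,4,2,3,1] i) (![![1,0,2],![1,2,0],![2,1,0],![2,1,0],![2,0,1]] i j) := by
  rw [eta5fun_def, L1]
  fin_cases i <;> fin_cases j <;> simp [L2z, L3]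

lemma nv01 : nvec 0 1 = ![![0,0,0],![0,0,0],![-2,1,1],![2,-1,-1],![-2,1,1]] := by
  funext i j; fin_cases i <;> fin_cases j <;> simp [nvec, rc] <;> norm_num

lemma nv02 : nvec 0 2 = ![![0,0,0],![-2,1,1],![0,0,0],![1,-2,1],![-1,2,-1]] := by
  funext i j; fin_cases i <;> fin_cases j <;> simp [nvec, rc] <;> norm_num

lemma nv03 : nvec 0 3 = ![![0,0,0],![-1,2,-1],![1,-2,1],![0,0,0],![1,1,-2]] := by
  funext i j; fin_cases i <;> fin_cases j <;> simp [nvec, rc] <;> norm_num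

lemma nv04 : nvec 0 4 = ![![0,0,0],![1,1,-2],![-1,-1,2],![1,1,-2],![0,0,0]] := by
  funext i j; fin_cases i <;> fin_cases j <;> simp [nvec, rc] <;> norm_num

lemma nv12 : nvec 1 2 = ![![-2,1,1],![0,0,0],![0,0,0],![-1,-1,2],![1,1,-2]] := by
  funext i j; fin_cases i <;> fin_cases j <;> simp [nvec, rc] <;> norm_num

lemma nv13 : nvec 1 3 = ![![-1,2,-1],![0,0,0],![-1,-1,2],![0,0,0],![-1,2,-1]] := by
  funext i j; fin_cases i <;> fin_cases j <;> simp [nvec, rc] <;> norm_num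

lemma nv14 : nvec 1 4 = ![![1,1,-2],![0,0,0],![1,-2,1],![-1,2,-1],![0,0,0]] := by
  funext i j; fin_cases i <;> fin_cases j <;> simp [nvec, rc] <;> norm_num

lemma nv23 : nvec 2 3 = ![![1,1,-2],![-1,-1,2],![0,0,0],![0,0,0],![-2,1,1]] := by
  funext i j; fin_cases i <;> fin_cases j <;> simp [nvec, rc] <;> norm_num

lemma nv24 : nvec 2 4 = ![![-1,2,-1],![1,-2,1],![0,0,0],![-2,1,1],![0,0,0]] := by
  funext i j; fin_cases i <;> fin_cases j <;> simp [nvec, rc] <;> norm_num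

lemma nv34 : nvec 3 4 = ![![-2,1,1],![2,-1,-1],![-2,1,1],![0,0,0],![0,0,0]] := by
  funext i j; fin_cases i <;> fin_cases j <;> simp [nvec, rc] <;> norm_num

lemma he01 : eta5fun (Equiv.swap 1 4) (nvec 0 1) = nvec 0 4 := by
  funext i j; rw [eta5_swap14]; fin_cases i <;> fin_cases j <;> simp [nv01, nv04] <;> norm_num

lemma he02 : eta5fun (Equiv.swap 1 4) (nvec 0 2) = -(nvec 0 2) := by
  funext i j; rw [eta5_swap14]; fin_cases i <;> fin_cases j <;> simp [nv02] <;> norm_num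

lemma he03 : eta5fun (Equiv.swap 1 4) (nvec 0 3) = -(nvec 0 3) := by
  funext i j; rw [eta5_swap14]; fin_cases i <;> fin_cases j <;> simp [nv03] <;> norm_num

lemma he04 : eta5fun (Equiv.swap 1 4) (nvec 0 4) = nvec 0 1 := by
  funext i j; rw [eta5_swap14]; fin_cases i <;> fin_cases j <;> simp [nv04, nv01] <;> norm_num

lemma he12 : eta5fun (Equiv.swap 1 4) (nvec 1 2) = nvec 2 4 := by
  funext i j; rw [eta5_swap14]; fin_cases i <;> fin_cases j <;> simp [nv12, nv24] <;> norm_num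

lemma he13 : eta5fun (Equiv.swap 1 4) (nvec 1 3) = nvec 3 4 := by
  funext i j; rw [eta5_swap14]; fin_cases i <;> fin_cases j <;> simp [nv13, nv34] <;> norm_num

lemma he14 : eta5fun (Equiv.swap 1 4) (nvec 1 4) = -(nvec 1 4) := by
  funext i j; rw [eta5_swap14]; fin_cases i <;> fin_cases j <;> simp [nv14] <;> norm_num

lemma he23 : eta5fun (Equiv.swap 1 4) (nvec 2 3) = -(nvec 2 3) := by
  funext i j; rw [eta5_swap14]; fin_cases i <;> fin_cases j <;> simp [nv23] <;> norm_num

lemma he24 : eta5fun (Equiv.swap 1 4) (nvec 2 4) = nvec 1 2 := by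
  funext i j; rw [eta5_swap14]; fin_cases i <;> fin_cases j <;> simp [nv24, nv12] <;> norm_num

lemma he34 : eta5fun (Equiv.swap 1 4) (nvec 3 4) = nvec 1 3 := by
  funext i j; rw [eta5_swap14]; fin_cases i <;> fin_cases j <;> simp [nv34, nv13] <;> norm_num
lemma hrel : nvec 1 4 + nvec 0 2 = nvec 0 3 + nvec 2 3 := by
  funext i j; fin_cases i <;> fin_cases j <;>
    simp [nv14, nv02, nv03, nv23] <;> norm_num

lemma hrel23 : nvec 2 3 = nvec 1 4 + nvec 0 2 - nvec 0 3 := by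
  funext i j; fin_cases i <;> fin_cases j <;>
    simp [nv14, nv02, nv03, nv23] <;> norm_num

noncomputable def bvec : Fin 5 → (Fin 5 → Fin 3 → ℝ) :=
  ![nvec 1 4, nvec 0 2, nvec 0 3, nvec 0 1 + nvec 0 4, nvec 1 2 + nvec 2 4]

lemma bv0 : bvec 0 = nvec 1 4 := by simp [bvec]
lemma bv1 : bvec 1 = nvec 0 2 := by simp [bvec]
lemma bv2 : bvec 2 = nvec 0 3 := by simp [bvec]
lemma bv3 : bvec 3 = nvec 0 1 + nvec 0 4 := by simp [bvec]
lemma bv4 : bvec 4 = nvec 1 2 + nvec 2 4 := by simp [bvec]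

lemma memB (i : Fin 5) : bvec i ∈ Submodule.span ℝ (Set.range bvec) :=
  Submodule.subset_span (Set.mem_range_self i)

lemma id01 : nvec 0 1 = (0 : ℝ) • bvec 0 + (1/2 : ℝ) • bvec 1 + (-1/2 : ℝ) • bvec 2 + (1/2 : ℝ) • bvec 3 + (0 : ℝ) • bvec 4 := by
  simp only [bv0, bv1, bv2, bv3, bv4]
  funext i j
  simp only [Pi.add_apply, Pi.smul_apply, smul_eq_mul]
  fin_cases i <;> fin_cases j <;>
    simp [nv01, nv02, nv03, nv04, nv12, nv14, nv24] <;> norm_num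

lemma mem01 : nvec 0 1 ∈ Submodule.span ℝ (Set.range bvec) := by
  rw [id01]
  exact add_mem (add_mem (add_mem (add_mem (Submodule.smul_mem _ _ (memB 0))
    (Submodule.smul_mem _ _ (memB 1))) (Submodule.smul_mem _ _ (memB 2)))
    (Submodule.smul_mem _ _ (memB 3))) (Submodule.smul_mem _ _ (memB 4))

lemma id02 : nvec 0 2 = (0 : ℝ) • bvec 0 + (1 : ℝ) • bvec 1 + (0 : ℝ) • bvec 2 + (0 : ℝ) • bvec 3 + (0 : ℝ) • bvec 4 := by
  simp only [bv0, bv1, bv2, bv3, bv4]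
  funext i j
  simp only [Pi.add_apply, Pi.smul_apply, smul_eq_mul]
  fin_cases i <;> fin_cases j <;>
    simp [nv01, nv02, nv03, nv04, nv12, nv14, nv24] <;> norm_num

lemma mem02 : nvec 0 2 ∈ Submodule.span ℝ (Set.range bvec) := by
  rw [id02]
  exact add_mem (add_mem (add_mem (add_mem (Submodule.smul_mem _ _ (memB 0))
    (Submodule.smul_mem _ _ (memB 1))) (Submodule.smul_mem _ _ (memB 2)))
    (Submodule.smul_mem _ _ (memB 3))) (Submodule.smul_mem _ _ (memB 4))

lemma id03 : nvec 0 3 = (0 : ℝ) • bvec 0 + (0 : ℝ) • bvec 1 + (1 : ℝ) • bvec 2 + (0 : ℝ) • bvec 3 + (0 : ℝ) • bvec 4 := by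
  simp only [bv0, bv1, bv2, bv3, bv4]
  funext i j
  simp only [Pi.add_apply, Pi.smul_apply, smul_eq_mul]
  fin_cases i <;> fin_cases j <;>
    simp [nv01, nv02, nv03, nv04, nv12, nv14, nv24] <;> norm_num

lemma mem03 : nvec 0 3 ∈ Submodule.span ℝ (Set.range bvec) := by
  rw [id03]
  exact add_mem (add_mem (add_mem (add_mem (Submodule.smul_mem _ _ (memB 0))
    (Submodule.smul_mem _ _ (memB 1))) (Submodule.smul_mem _ _ (memB 2)))
    (Submodule.smul_mem _ _ (memB 3))) (Submodule.smul_mem _ _ (memB 4))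

lemma id04 : nvec 0 4 = (0 : ℝ) • bvec 0 + (-1/2 : ℝ) • bvec 1 + (1/2 : ℝ) • bvec 2 + (1/2 : ℝ) • bvec 3 + (0 : ℝ) • bvec 4 := by
  simp only [bv0, bv1, bv2, bv3, bv4]
  funext i j
  simp only [Pi.add_apply, Pi.smul_apply, smul_eq_mul]
  fin_cases i <;> fin_cases j <;>
    simp [nv01, nv02, nv03, nv04, nv12, nv14, nv24] <;> norm_num

lemma mem04 : nvec 0 4 ∈ Submodule.span ℝ (Set.range bvec) := by
  rw [id04]
  exact add_mem (add_mem (add_mem (add_mem (Submodule.smul_mem _ _ (memB 0))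
    (Submodule.smul_mem _ _ (memB 1))) (Submodule.smul_mem _ _ (memB 2)))
    (Submodule.smul_mem _ _ (memB 3))) (Submodule.smul_mem _ _ (memB 4))

lemma id12 : nvec 1 2 = (-1/2 : ℝ) • bvec 0 + (0 : ℝ) • bvec 1 + (1/2 : ℝ) • bvec 2 + (0 : ℝ) • bvec 3 + (1/2 : ℝ) • bvec 4 := by
  simp only [bv0, bv1, bv2, bv3, bv4]
  funext i j
  simp only [Pi.add_apply, Pi.smul_apply, smul_eq_mul]
  fin_cases i <;> fin_cases j <;>
    simp [nv01, nv02, nv03, nv04, nv12, nv14, nv24] <;> norm_num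

lemma mem12 : nvec 1 2 ∈ Submodule.span ℝ (Set.range bvec) := by
  rw [id12]
  exact add_mem (add_mem (add_mem (add_mem (Submodule.smul_mem _ _ (memB 0))
    (Submodule.smul_mem _ _ (memB 1))) (Submodule.smul_mem _ _ (memB 2)))
    (Submodule.smul_mem _ _ (memB 3))) (Submodule.smul_mem _ _ (memB 4))

lemma id13 : nvec 1 3 = (1/2 : ℝ) • bvec 0 + (1/2 : ℝ) • bvec 1 + (0 : ℝ) • bvec 2 + (1/2 : ℝ) • bvec 3 + (1/2 : ℝ) • bvec 4 := by
  simp only [bv0, bv1, bv2, bv3, bv4]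
  funext i j
  simp only [Pi.add_apply, Pi.smul_apply, smul_eq_mul]
  fin_cases i <;> fin_cases j <;>
    simp [nv01, nv02, nv03, nv04, nv12, nv13, nv14, nv24] <;> norm_num

lemma mem13 : nvec 1 3 ∈ Submodule.span ℝ (Set.range bvec) := by
  rw [id13]
  exact add_mem (add_mem (add_mem (add_mem (Submodule.smul_mem _ _ (memB 0))
    (Submodule.smul_mem _ _ (memB 1))) (Submodule.smul_mem _ _ (memB 2)))
    (Submodule.smul_mem _ _ (memB 3))) (Submodule.smul_mem _ _ (memB 4))

lemma id14 : nvec 1 4 = (1 : ℝ) • bvec 0 + (0 : ℝ) • bvec 1 + (0 : ℝ) • bvec 2 + (0 : ℝ) • bvec 3 + (0 : ℝ) • bvec 4 := by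
  simp only [bv0, bv1, bv2, bv3, bv4]
  funext i j
  simp only [Pi.add_apply, Pi.smul_apply, smul_eq_mul]
  fin_cases i <;> fin_cases j <;>
    simp [nv01, nv02, nv03, nv04, nv12, nv14, nv24] <;> norm_num

lemma mem14 : nvec 1 4 ∈ Submodule.span ℝ (Set.range bvec) := by
  rw [id14]
  exact add_mem (add_mem (add_mem (add_mem (Submodule.smul_mem _ _ (memB 0))
    (Submodule.smul_mem _ _ (memB 1))) (Submodule.smul_mem _ _ (memB 2)))
    (Submodule.smul_mem _ _ (memB 3))) (Submodule.smul_mem _ _ (memB 4))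

lemma id23 : nvec 2 3 = (1 : ℝ) • bvec 0 + (1 : ℝ) • bvec 1 + (-1 : ℝ) • bvec 2 + (0 : ℝ) • bvec 3 + (0 : ℝ) • bvec 4 := by
  simp only [bv0, bv1, bv2, bv3, bv4]
  funext i j
  simp only [Pi.add_apply, Pi.smul_apply, smul_eq_mul]
  fin_cases i <;> fin_cases j <;>
    simp [nv01, nv02, nv03, nv04, nv12, nv14, nv23, nv24] <;> norm_num

lemma mem23 : nvec 2 3 ∈ Submodule.span ℝ (Set.range bvec) := by
  rw [id23]
  exact add_mem (add_mem (add_mem (add_mem (Submodule.smul_mem _ _ (memB 0))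
    (Submodule.smul_mem _ _ (memB 1))) (Submodule.smul_mem _ _ (memB 2)))
    (Submodule.smul_mem _ _ (memB 3))) (Submodule.smul_mem _ _ (memB 4))

lemma id24 : nvec 2 4 = (1/2 : ℝ) • bvec 0 + (0 : ℝ) • bvec 1 + (-1/2 : ℝ) • bvec 2 + (0 : ℝ) • bvec 3 + (1/2 : ℝ) • bvec 4 := by
  simp only [bv0, bv1, bv2, bv3, bv4]
  funext i j
  simp only [Pi.add_apply, Pi.smul_apply, smul_eq_mul]
  fin_cases i <;> fin_cases j <;>
    simp [nv01, nv02, nv03, nv04, nv12, nv14, nv24] <;> norm_num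

lemma mem24 : nvec 2 4 ∈ Submodule.span ℝ (Set.range bvec) := by
  rw [id24]
  exact add_mem (add_mem (add_mem (add_mem (Submodule.smul_mem _ _ (memB 0))
    (Submodule.smul_mem _ _ (memB 1))) (Submodule.smul_mem _ _ (memB 2)))
    (Submodule.smul_mem _ _ (memB 3))) (Submodule.smul_mem _ _ (memB 4))

lemma id34 : nvec 3 4 = (-1/2 : ℝ) • bvec 0 + (-1/2 : ℝ) • bvec 1 + (0 : ℝ) • bvec 2 + (1/2 : ℝ) • bvec 3 + (1/2 : ℝ) • bvec 4 := by
  simp only [bv0, bv1, bv2, bv3, bv4]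
  funext i j
  simp only [Pi.add_apply, Pi.smul_apply, smul_eq_mul]
  fin_cases i <;> fin_cases j <;>
    simp [nv01, nv02, nv03, nv04, nv12, nv14, nv24, nv34] <;> norm_num

lemma mem34 : nvec 3 4 ∈ Submodule.span ℝ (Set.range bvec) := by
  rw [id34]
  exact add_mem (add_mem (add_mem (add_mem (Submodule.smul_mem _ _ (memB 0))
    (Submodule.smul_mem _ _ (memB 1))) (Submodule.smul_mem _ _ (memB 2)))
    (Submodule.smul_mem _ _ (memB 3))) (Submodule.smul_mem _ _ (memB 4))

lemma case01 :
    eta5fun (Equiv.swap 1 4) (nvec 0 1) ≠ nvec 0 1 ∧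
    eta5fun (Equiv.swap 1 4) (nvec 0 1) ≠ -(nvec 0 1) := by
  rw [he01]
  constructor <;>
  · intro hcon
    have hc := congrFun (congrFun hcon 1) 0
    norm_num [nv04, nv01, Matrix.vecHead, Matrix.vecTail] at hc

lemma case04 :
    eta5fun (Equiv.swap 1 4) (nvec 0 4) ≠ nvec 0 4 ∧
    eta5fun (Equiv.swap 1 4) (nvec 0 4) ≠ -(nvec 0 4) := by
  rw [he04]
  constructor <;>
  · intro hcon
    have hc := congrFun (congrFun hcon 1) 0
    norm_num [nv01, nv04, Matrix.vecHead, Matrix.vecTail] at hc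

lemma case12 :
    eta5fun (Equiv.swap 1 4) (nvec 1 2) ≠ nvec 1 2 ∧
    eta5fun (Equiv.swap 1 4) (nvec 1 2) ≠ -(nvec 1 2) := by
  rw [he12]
  constructor <;>
  · intro hcon
    have hc := congrFun (congrFun hcon 0) 0
    norm_num [nv24, nv12, Matrix.vecHead, Matrix.vecTail] at hc

lemma case24 :
    eta5fun (Equiv.swap 1 4) (nvec 2 4) ≠ nvec 2 4 ∧
    eta5fun (Equiv.swap 1 4) (nvec 2 4) ≠ -(nvec 2 4) := by
  rw [he24]
  constructor <;>
  · intro hcon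
    have hc := congrFun (congrFun hcon 0) 0
    norm_num [nv12, nv24, Matrix.vecHead, Matrix.vecTail] at hc

lemma case13 :
    eta5fun (Equiv.swap 1 4) (nvec 1 3) ≠ nvec 1 3 ∧
    eta5fun (Equiv.swap 1 4) (nvec 1 3) ≠ -(nvec 1 3) := by
  rw [he13]
  constructor <;>
  · intro hcon
    have hc := congrFun (congrFun hcon 0) 0
    norm_num [nv34, nv13, Matrix.vecHead, Matrix.vecTail] at hc

lemma case34 :
    eta5fun (Equiv.swap 1 4) (nvec 3 4) ≠ nvec 3 4 ∧
    eta5fun (Equiv.swap 1 4) (nvec 3 4) ≠ -(nvec 3 4) := by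
  rw [he34]
  constructor <;>
  · intro hcon
    have hc := congrFun (congrFun hcon 0) 0
    norm_num [nv13, nv34, Matrix.vecHead, Matrix.vecTail] at hc
lemma eta5lin_apply (π : Equiv.Perm (Fin 5)) (v : Fin 5 → Fin 3 → ℝ) :
    eta5lin π v = eta5fun π v := rfl

lemma hli3 : LinearIndependent ℝ ![nvec 1 4, nvec 0 2, nvec 0 3] := by
  rw [Fintype.linearIndependent_iff]
  intro g hg
  rw [Fin.sum_univ_three] at hg
  simp only [Matrix.cons_val_zero, Matrix.cons_val_one, Matrix.head_cons,
    Matrix.cons_val_two, Matrix.tail_cons] at hg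
  have e1 := congrFun (congrFun hg 0) 0
  have e2 := congrFun (congrFun hg 3) 0
  have e3 := congrFun (congrFun hg 4) 0
  simp [nv14, nv02, nv03,
    Pi.add_apply, Pi.smul_apply, smul_eq_mul] at e1 e2 e3
  have h0 : g 0 = 0 := by linarith
  have h1 : g 1 = 0 := by linarith
  have h2 : g 2 = 0 := by linarith
  intro i; fin_cases i
  · exact h0
  · exact h1
  · exact h2

lemma span4 : Submodule.span ℝ
    ({nvec 1 4, nvec 0 2, nvec 0 3, nvec 2 3} : Set (Fin 5 → Fin 3 → ℝ)) =
    Submodule.span ℝ (Set.range ![nvec 1 4, nvec 0 2, nvec 0 3]) := by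
  have hr : Set.range ![nvec 1 4, nvec 0 2, nvec 0 3] =
      ({nvec 1 4, nvec 0 2, nvec 0 3} : Set (Fin 5 → Fin 3 → ℝ)) := by
    ext x
    simp only [Matrix.range_cons, Matrix.range_empty, Set.union_empty, Set.mem_insert_iff,
      Set.union_singleton, Set.mem_union, Set.mem_range, Set.mem_singleton_iff]
    tauto
  rw [hr]
  apply le_antisymm
  · rw [Submodule.span_le]
    intro x hx
    simp only [Set.mem_insert_iff, Set.mem_singleton_iff] at hx
    rcases hx with rfl | rfl | rfl | rfl
    · exact Submodule.subset_span (by simp)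
    · exact Submodule.subset_span (by simp)
    · exact Submodule.subset_span (by simp)
    · rw [hrel23]
      exact sub_mem (add_mem (Submodule.subset_span (by simp))
        (Submodule.subset_span (by simp))) (Submodule.subset_span (by simp))
  · apply Submodule.span_mono
    intro x hx
    simp only [Set.mem_insert_iff, Set.mem_singleton_iff] at hx ⊢
    tauto

set_option maxHeartbeats 1600000 in
lemma hli5 : LinearIndependent ℝ bvec := by
  rw [Fintype.linearIndependent_iff]
  intro g hg
  rw [Fin.sum_univ_five, bv0, bv1, bv2, bv3, bv4] at hg
  have e1 := congrFun (congrFun hg 0) 0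
  have e2 := congrFun (congrFun hg 0) 1
  have e3 := congrFun (congrFun hg 1) 0
  have e4 := congrFun (congrFun hg 1) 1
  have e5 := congrFun (congrFun hg 2) 0
  simp [nv14, nv02, nv03, nv01, nv04, nv12, nv24,
    Pi.add_apply, Pi.smul_apply, smul_eq_mul] at e1 e2 e3 e4 e5
  have h0 : g 0 = 0 := by linarith
  have h4 : g 4 = 0 := by linarith
  have h3 : g 3 = 0 := by linarith
  have h2 : g 2 = 0 := by linarith
  have h1 : g 1 = 0 := by linarith
  intro i; fin_cases i
  · exact h0
  · exact h1
  · exact h2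
  · exact h3
  · exact h4

lemma hmemN : ∀ i, bvec i ∈ Nspan := by
  intro i; fin_cases i
  · show bvec 0 ∈ Nspan
    rw [bv0]; exact Submodule.subset_span ⟨1, 4, by decide, rfl⟩
  · show bvec 1 ∈ Nspan
    rw [bv1]; exact Submodule.subset_span ⟨0, 2, by decide, rfl⟩
  · show bvec 2 ∈ Nspan
    rw [bv2]; exact Submodule.subset_span ⟨0, 3, by decide, rfl⟩
  · show bvec 3 ∈ Nspan
    rw [bv3]
    exact add_mem (Submodule.subset_span ⟨0, 1, by decide, rfl⟩)
      (Submodule.subset_span ⟨0, 4, by decide, rfl⟩)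
  · show bvec 4 ∈ Nspan
    rw [bv4]
    exact add_mem (Submodule.subset_span ⟨1, 2, by decide, rfl⟩)
      (Submodule.subset_span ⟨2, 4, by decide, rfl⟩)

lemma hNs : Nspan = Submodule.span ℝ (Set.range bvec) := by
  apply le_antisymm
  · rw [Nspan, Submodule.span_le]
    rintro x ⟨p, q, hpq, rfl⟩
    fin_cases p <;> fin_cases q <;>
      first
        | exact absurd hpq (by decide)
        | exact mem01 | exact mem02 | exact mem03 | exact mem04 | exact mem12
        | exact mem13 | exact mem14 | exact mem23 | exact mem24 | exact mem34
  · rw [Submodule.span_le]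
    rintro x ⟨i, rfl⟩
    exact hmemN i

noncomputable def Bfam : Fin 5 → Nspan := fun i => ⟨bvec i, hmemN i⟩

lemma hliB : LinearIndependent ℝ Bfam :=
  LinearIndependent.of_comp Nspan.subtype (by exact hli5)

lemma hspB : ⊤ ≤ Submodule.span ℝ (Set.range Bfam) := by
  have hmap : Submodule.map Nspan.subtype (Submodule.span ℝ (Set.range Bfam)) =
      Submodule.map Nspan.subtype ⊤ := by
    rw [Submodule.map_span, Submodule.map_subtype_top, ← Set.range_comp]
    exact hNs.symm
  exact (Submodule.map_injective_of_injective (Submodule.injective_subtype Nspan) hmap).ge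

noncomputable def Bb : Module.Basis (Fin 5) ℝ Nspan := Module.Basis.mk hliB hspB

lemma him : ∀ i : Fin 5,
    eta5fun (Equiv.swap 1 4) (bvec i) = (![-1,-1,-1,1,1] i : ℝ) • bvec i := by
  intro i; fin_cases i
  · show eta5fun (Equiv.swap 1 4) (bvec 0) = (-1 : ℝ) • bvec 0
    rw [bv0, he14, neg_one_smul]
  · show eta5fun (Equiv.swap 1 4) (bvec 1) = (-1 : ℝ) • bvec 1
    rw [bv1, he02, neg_one_smul]
  · show eta5fun (Equiv.swap 1 4) (bvec 2) = (-1 : ℝ) • bvec 2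
    rw [bv2, he03, neg_one_smul]
  · show eta5fun (Equiv.swap 1 4) (bvec 3) = (1 : ℝ) • bvec 3
    have hadd : eta5fun (Equiv.swap 1 4) (nvec 0 1 + nvec 0 4) =
        eta5fun (Equiv.swap 1 4) (nvec 0 1) + eta5fun (Equiv.swap 1 4) (nvec 0 4) :=
      map_add (eta5lin (Equiv.swap 1 4)) _ _
    rw [bv3, one_smul, hadd, he01, he04, add_comm]
  · show eta5fun (Equiv.swap 1 4) (bvec 4) = (1 : ℝ) • bvec 4
    have hadd : eta5fun (Equiv.swap 1 4) (nvec 1 2 + nvec 2 4) =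
        eta5fun (Equiv.swap 1 4) (nvec 1 2) + eta5fun (Equiv.swap 1 4) (nvec 2 4) :=
      map_add (eta5lin (Equiv.swap 1 4)) _ _
    rw [bv4, one_smul, hadd, he12, he24, add_comm]

lemma trace_part (h : ∀ v ∈ Nspan, eta5lin (Equiv.swap 1 4) v ∈ Nspan) :
    LinearMap.trace ℝ Nspan ((eta5lin (Equiv.swap 1 4)).restrict h) = -1 := by
  classical
  have hBi : ∀ i, ((Bb i : Nspan) : Fin 5 → Fin 3 → ℝ) = bvec i := by
    intro i; rw [Bb, Module.Basis.mk_apply]; rfl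
  have hkey : ∀ i : Fin 5, ((eta5lin (Equiv.swap 1 4)).restrict h) (Bb i) =
      (![-1,-1,-1,1,1] i : ℝ) • Bb i := by
    intro i
    apply Subtype.ext
    have hL : ((((eta5lin (Equiv.swap 1 4)).restrict h) (Bb i) : Nspan) :
        Fin 5 → Fin 3 → ℝ) = eta5fun (Equiv.swap 1 4) ((Bb i : Nspan) :
        Fin 5 → Fin 3 → ℝ) := rfl
    rw [hL, hBi, Submodule.coe_smul, hBi]
    exact him i
  rw [LinearMap.trace_eq_matrix_trace ℝ Bb, Matrix.trace]
  have hdiag : ∀ i, (LinearMap.toMatrix Bb Bb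
      ((eta5lin (Equiv.swap 1 4)).restrict h)).diag i = (![-1,-1,-1,1,1] i : ℝ) := by
    intro i
    rw [Matrix.diag_apply, LinearMap.toMatrix_apply, hkey i, map_smul]
    simp [Module.Basis.repr_self]
  rw [Fin.sum_univ_five]
  rw [hdiag 0, hdiag 1, hdiag 2, hdiag 3, hdiag 4]
  simp <;> norm_num
/-- For the transposition `π = 15342` (exchanging `2` and `5`; 0-indexed: `swap 1 4`):
`η₅(π)(n_λ) = −n_λ` exactly for the four edges `λ ∈ {25, 13, 14, 34}` and for no other
edge is `η₅(π)(n_λ) = ±n_λ`; these four vectors satisfy `n₂₅ + n₁₃ = n₁₄ + n₃₄` and span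
a 3-dimensional subspace; and the trace of `η₅(π)` on the span of all ten `n_λ`
equals `−1`. -/
theorem transposition_trace_on_normals :
    (eta5fun (Equiv.swap 1 4) (nvec 1 4) = -(nvec 1 4)) ∧
    (eta5fun (Equiv.swap 1 4) (nvec 0 2) = -(nvec 0 2)) ∧
    (eta5fun (Equiv.swap 1 4) (nvec 0 3) = -(nvec 0 3)) ∧
    (eta5fun (Equiv.swap 1 4) (nvec 2 3) = -(nvec 2 3)) ∧
    (∀ p q : Fin 5, p < q →
      ¬((p, q) = (1, 4) ∨ (p, q) = (0, 2) ∨ (p, q) = (0, 3) ∨ (p, q) = (2, 3)) →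
      eta5fun (Equiv.swap 1 4) (nvec p q) ≠ nvec p q ∧
      eta5fun (Equiv.swap 1 4) (nvec p q) ≠ -(nvec p q)) ∧
    (nvec 1 4 + nvec 0 2 = nvec 0 3 + nvec 2 3) ∧
    (Module.finrank ℝ
      (Submodule.span ℝ ({nvec 1 4, nvec 0 2, nvec 0 3, nvec 2 3} :
        Set (Fin 5 → Fin 3 → ℝ))) = 3) ∧
    (∀ h : ∀ v ∈ Nspan, eta5lin (Equiv.swap 1 4) v ∈ Nspan,
      LinearMap.trace ℝ Nspan ((eta5lin (Equiv.swap 1 4)).restrict h) = -1) := by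
  refine ⟨he14, he02, he03, he23, ?_, hrel, ?_, fun h => trace_part h⟩
  · intro p q hpq hne
    fin_cases p <;> fin_cases q <;>
      first
        | exact absurd hpq (by decide)
        | exact absurd (by decide) hne
        | exact case01 | exact case04 | exact case12 | exact case24
        | exact case13 | exact case34
  · rw [span4, finrank_span_eq_card hli3, Fintype.card_fin]
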